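/- Let K be an algebraically closed field, complete with respect to a nontrivial non-Archimedean absolute value. Then the Berkovich affine line 𝔸¹_Berk(K) is Hausdorff, locally compact, and uniquely arcwise connected: any two distinct points ξ ≠ ξ' of 𝔸¹_Berk(K) are joined by an arc (a subspace homeomorphic to [0,1] with endpoints ξ and ξ'), and any two arcs joining ξ and ξ' have the same image. -/

import Mathlib

open Polynomial Filter

/-- A non-Archimedean absolute value on a field `K`. -/
def IsNonarchAbs {K : Type*} [Field K] (abv : K → ℝ) : Prop :=
  (∀ x, 0 ≤ abv x) ∧ (∀ x, abv x = 0 ↔ x = 0) ∧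
  (∀ x y, abv (x * y) = abv x * abv y) ∧
  (∀ x y, abv (x + y) ≤ max (abv x) (abv y))

/-- A multiplicative seminorm on `K[X]` extending the absolute value `abv`. -/
def IsMultSeminorm {K : Type*} [Field K] (abv : K → ℝ) (N : Polynomial K → ℝ) : Prop :=
  (∀ f, 0 ≤ N f) ∧ (∀ c : K, N (C c) = abv c) ∧
  (∀ f g, N (f + g) ≤ N f + N g) ∧ (∀ f g, N (f * g) = N f * N g)

/-- The Berkovich affine line over `(K, abv)`: the set of multiplicative seminorms on
`K[X]` extending `abv`, with the topology of pointwise convergence (the subspace topology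
from the product topology on `K[X] → ℝ`). -/
abbrev BerkLine (K : Type*) [Field K] (abv : K → ℝ) :=
  {N : Polynomial K → ℝ // IsMultSeminorm abv N}

namespace BerkAux

/-- Real analysis helper: if `c ^ n ≤ (n+1) M ^ n` for all `n` then `c ≤ M`. -/
theorem pow_le_linear_imp_le {c M : ℝ} (hc : 0 ≤ c) (hM : 0 ≤ M)
    (h : ∀ n : ℕ, c ^ n ≤ ((n : ℝ) + 1) * M ^ n) : c ≤ M := by
  by_contra hlt
  push_neg at hlt
  rcases eq_or_lt_of_le hM with hM0 | hM0
  · have h1 := h 1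
    rw [← hM0] at h1
    simp at h1
    nlinarith
  · set q := c / M with hq
    have hq1 : 1 < q := (one_lt_div hM0).mpr hlt
    have hqn : ∀ n : ℕ, q ^ n ≤ (n : ℝ) + 1 := by
      intro n
      rw [hq, div_pow, div_le_iff₀ (pow_pos hM0 n)]
      exact h n
    set p := Real.sqrt q with hp
    have hq0 : (0:ℝ) ≤ q := le_of_lt (lt_trans one_pos hq1)
    have hp1 : 1 < p := by
      rw [hp]
      rw [show (1:ℝ) = Real.sqrt 1 from (Real.sqrt_one).symm]
      exact Real.sqrt_lt_sqrt (by norm_num) hq1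
    have hpq : p ^ 2 = q := Real.sq_sqrt hq0
    set ε := p - 1 with hε
    have hε0 : 0 < ε := by simp [hε]; linarith
    obtain ⟨n0, hn0⟩ := exists_nat_gt (2 / ε ^ 2)
    set n := n0 + 1 with hn
    have hn1 : 1 ≤ (n : ℝ) := by simp [hn]
    have hnε : 2 < (n : ℝ) * ε ^ 2 := by
      have h2 : 2 / ε ^ 2 < (n : ℝ) := by
        have : (n0 : ℝ) ≤ (n : ℝ) := by simp [hn]
        linarith
      calc (2:ℝ) = (2 / ε ^ 2) * ε ^ 2 := by field_simp
      _ < (n : ℝ) * ε ^ 2 := by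
          apply mul_lt_mul_of_pos_right h2 (by positivity)
    have hpn : 1 + (n : ℝ) * ε ≤ p ^ n := by
      have := one_add_mul_le_pow (a := ε) (by linarith) n
      simpa [hε] using this
    have hqnn : ((n : ℝ) * ε) ^ 2 ≤ q ^ n := by
      have h1 : ((n : ℝ) * ε) ^ 2 ≤ (p ^ n) ^ 2 := by
        apply pow_le_pow_left₀ (by positivity)
        nlinarith
      calc ((n : ℝ) * ε) ^ 2 ≤ (p ^ n) ^ 2 := h1
      _ = (p ^ 2) ^ n := by ring
      _ = q ^ n := by rw [hpq]
    have hcontr : (n : ℝ) + 1 < q ^ n := by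
      have : ((n : ℝ) * ε) ^ 2 = (n : ℝ) * ((n:ℝ) * ε ^ 2) := by ring
      nlinarith
    exact absurd (hqn n) (not_le.mpr hcontr)

variable {K : Type*} [Field K] {abv : K → ℝ}

section abv
variable (habv : IsNonarchAbs abv)
include habv

theorem abv_zero' : abv 0 = 0 := (habv.2.1 0).mpr rfl

theorem abv_one' : abv 1 = 1 := by
  have h := habv.2.2.1 1 1
  rw [one_mul] at h
  have h1 : abv 1 ≠ 0 := fun h0 => one_ne_zero ((habv.2.1 1).mp h0)
  have := mul_left_cancel₀ h1 (by linarith : abv 1 * 1 = abv 1 * abv 1)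
  linarith

theorem abv_neg_one : abv (-1) = 1 := by
  have h : abv (-1) * abv (-1) = 1 := by
    rw [← habv.2.2.1]; norm_num; exact abv_one' habv
  rcases mul_self_eq_one_iff.mp h with h1 | h1
  · exact h1
  · exfalso; have := habv.1 (-1); rw [h1] at this; linarith

theorem abv_neg' (x : K) : abv (-x) = abv x := by
  rw [show -x = -1 * x by ring, habv.2.2.1, abv_neg_one habv, one_mul]

theorem abv_natCast_le_one (n : ℕ) : abv (n : K) ≤ 1 := by
  induction n with
  | zero => simp [abv_zero' habv]
  | succ k ih =>
    push_cast
    calc abv ((k : K) + 1) ≤ max (abv (k : K)) (abv 1) := habv.2.2.2 _ _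
    _ ≤ 1 := max_le ih (le_of_eq (abv_one' habv))

end abv

section seminorm
variable (habv : IsNonarchAbs abv) {N : Polynomial K → ℝ} (hN : IsMultSeminorm abv N)
include habv hN

theorem n_zero : N 0 = 0 := by
  rw [show (0 : K[X]) = C 0 by simp, hN.2.1, abv_zero' habv]

theorem n_one : N 1 = 1 := by
  rw [show (1 : K[X]) = C 1 by simp, hN.2.1, abv_one' habv]

theorem n_pow (f : K[X]) (n : ℕ) : N (f ^ n) = N f ^ n := by
  induction n with
  | zero => simp [n_one habv hN]
  | succ k ih => rw [pow_succ, pow_succ, hN.2.2.2, ih]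

theorem n_neg (f : K[X]) : N (-f) = N f := by
  rw [show -f = C (-1) * f by simp, hN.2.2.2, hN.2.1, abv_neg_one habv, one_mul]

theorem n_sum_le {ι : Type*} (s : Finset ι) (F : ι → K[X]) :
    N (∑ i ∈ s, F i) ≤ ∑ i ∈ s, N (F i) := by
  classical
  induction s using Finset.induction with
  | empty => simp [n_zero habv hN]
  | insert a s hx ih =>
    rw [Finset.sum_insert hx, Finset.sum_insert hx]
    exact le_trans (hN.2.2.1 _ _) (by linarith)

theorem n_nonarch (f g : K[X]) : N (f + g) ≤ max (N f) (N g) := by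
  set M := max (N f) (N g) with hM
  have hM0 : 0 ≤ M := le_trans (hN.1 f) (le_max_left _ _)
  apply pow_le_linear_imp_le (hN.1 _) hM0
  intro n
  have hf : N f ≤ M := le_max_left _ _
  have hg : N g ≤ M := le_max_right _ _
  calc N (f + g) ^ n = N ((f + g) ^ n) := (n_pow habv hN _ n).symm
  _ = N (∑ k ∈ Finset.range (n + 1), f ^ k * g ^ (n - k) * (n.choose k : K[X])) := by
      rw [add_pow]
  _ ≤ ∑ k ∈ Finset.range (n + 1), N (f ^ k * g ^ (n - k) * (n.choose k : K[X])) :=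
      n_sum_le habv hN _ _
  _ ≤ ∑ _k ∈ Finset.range (n + 1), M ^ n := by
      apply Finset.sum_le_sum
      intro k hk
      rw [Finset.mem_range] at hk
      have hkn : k ≤ n := by omega
      rw [hN.2.2.2, hN.2.2.2, n_pow habv hN, n_pow habv hN]
      have hc : N ((n.choose k : K[X])) ≤ 1 := by
        rw [show ((n.choose k : K[X])) = C ((n.choose k : K)) from (C_eq_natCast _).symm, hN.2.1]
        exact abv_natCast_le_one habv _
      have h1 : N f ^ k * N g ^ (n - k) ≤ M ^ k * M ^ (n - k) := by
        apply mul_le_mul (pow_le_pow_left₀ (hN.1 f) hf k) (pow_le_pow_left₀ (hN.1 g) hg _)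
          (pow_nonneg (hN.1 g) _) (pow_nonneg hM0 _)
      have h2 : M ^ k * M ^ (n - k) = M ^ n := by
        rw [← pow_add]; congr 1; omega
      calc N f ^ k * N g ^ (n - k) * N ((n.choose k : K[X]))
          ≤ N f ^ k * N g ^ (n - k) * 1 := by
            apply mul_le_mul_of_nonneg_left hc
              (mul_nonneg (pow_nonneg (hN.1 f) _) (pow_nonneg (hN.1 g) _))
      _ = N f ^ k * N g ^ (n - k) := by ring
      _ ≤ M ^ n := by rw [← h2]; exact h1
  _ = ((n : ℝ) + 1) * M ^ n := by
      rw [Finset.sum_const, Finset.card_range, nsmul_eq_mul]; push_cast; ring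

theorem n_add_eq_left {f g : K[X]} (h : N g < N f) : N (f + g) = N f := by
  apply le_antisymm
  · exact le_trans (n_nonarch habv hN f g) (max_le (le_refl _) (le_of_lt h))
  · by_contra hlt
    push_neg at hlt
    have h1 : N f ≤ max (N (f + g)) (N g) := by
      have := n_nonarch habv hN (f + g) (-g)
      simpa [n_neg habv hN] using this
    rcases max_cases (N (f + g)) (N g) with ⟨he, _⟩ | ⟨he, _⟩ <;> rw [he] at h1 <;> linarith

theorem n_sum_le_mul {ι : Type*} {s : Finset ι} {F : ι → K[X]} {M B : ℝ}
    (hM : 0 ≤ M) (hB : 0 ≤ B) (h : ∀ i ∈ s, N (F i) * M ≤ B) :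
    N (∑ i ∈ s, F i) * M ≤ B := by
  classical
  induction s using Finset.induction with
  | empty => simpa [n_zero habv hN] using hB
  | insert a s hx ih =>
    rw [Finset.sum_insert hx]
    have h1 : N (F a + ∑ i ∈ s, F i) ≤ max (N (F a)) (N (∑ i ∈ s, F i)) :=
      n_nonarch habv hN _ _
    have h2 : N (F a) * M ≤ B := h a (Finset.mem_insert_self _ _)
    have h3 : N (∑ i ∈ s, F i) * M ≤ B := ih (fun i hi => h i (Finset.mem_insert_of_mem hi))
    calc N (F a + ∑ i ∈ s, F i) * M ≤ max (N (F a)) (N (∑ i ∈ s, F i)) * M :=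
        mul_le_mul_of_nonneg_right h1 hM
    _ = max (N (F a) * M) (N (∑ i ∈ s, F i) * M) := max_mul_of_nonneg _ _ hM
    _ ≤ B := max_le h2 h3

theorem n_sum_lt_mul {ι : Type*} {s : Finset ι} {F : ι → K[X]} {M B : ℝ}
    (hM : 0 ≤ M) (hB : 0 < B) (h : ∀ i ∈ s, N (F i) * M < B) :
    N (∑ i ∈ s, F i) * M < B := by
  classical
  induction s using Finset.induction with
  | empty => simpa [n_zero habv hN] using hB
  | insert a s hx ih =>
    rw [Finset.sum_insert hx]
    have h1 : N (F a + ∑ i ∈ s, F i) ≤ max (N (F a)) (N (∑ i ∈ s, F i)) :=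
      n_nonarch habv hN _ _
    have h2 : N (F a) * M < B := h a (Finset.mem_insert_self _ _)
    have h3 : N (∑ i ∈ s, F i) * M < B := ih (fun i hi => h i (Finset.mem_insert_of_mem hi))
    calc N (F a + ∑ i ∈ s, F i) * M ≤ max (N (F a)) (N (∑ i ∈ s, F i)) * M :=
        mul_le_mul_of_nonneg_right h1 hM
    _ = max (N (F a) * M) (N (∑ i ∈ s, F i) * M) := max_mul_of_nonneg _ _ hM
    _ < B := max_lt h2 h3

end seminorm

section factor
variable (habv : IsNonarchAbs abv) {N : Polynomial K → ℝ} (hN : IsMultSeminorm abv N)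
include habv hN

theorem n_multiset_prod (m : Multiset K[X]) : N m.prod = (m.map N).prod := by
  induction m using Multiset.induction with
  | empty => simp [n_one habv hN]
  | cons a s ih => rw [Multiset.prod_cons, Multiset.map_cons, Multiset.prod_cons, hN.2.2.2, ih]

theorem n_eq_prod [IsAlgClosed K] {f : K[X]} (hf : f ≠ 0) :
    N f = abv f.leadingCoeff * ((f.roots.map fun a => N (X - C a)).prod) := by
  have hsp : Splits f := IsAlgClosed.splits f
  conv_lhs => rw [hsp.eq_prod_roots]
  rw [hN.2.2.2, hN.2.1, n_multiset_prod habv hN, Multiset.map_map]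
  rfl

end factor

theorem n_ext [IsAlgClosed K] (habv : IsNonarchAbs abv) {N N' : Polynomial K → ℝ}
    (hN : IsMultSeminorm abv N) (hN' : IsMultSeminorm abv N')
    (h : ∀ a : K, N (X - C a) = N' (X - C a)) : N = N' := by
  funext f
  by_cases hf : f = 0
  · rw [hf, n_zero habv hN, n_zero habv hN']
  · rw [n_eq_prod habv hN hf, n_eq_prod habv hN' hf]
    congr 1
    exact congrArg Multiset.prod (Multiset.map_congr rfl fun a _ => h a)

/-! ### Hasse derivative facts -/

theorem hd_natDegree (f : Polynomial K) :
    hasseDeriv f.natDegree f = C f.leadingCoeff := by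
  ext n
  rw [hasseDeriv_coeff]
  cases n with
  | zero =>
    rw [zero_add, Nat.choose_self, Nat.cast_one, one_mul, coeff_C_zero]
    rfl
  | succ k =>
    rw [coeff_eq_zero_of_natDegree_lt (by omega)]
    simp [Polynomial.coeff_C]

/-! ### The canonical paths -/

noncomputable def nr (N : Polynomial K → ℝ) (r : ℝ) (f : Polynomial K) : ℝ :=
  (Finset.range (f.natDegree + 1)).sup'
    (Finset.nonempty_range_iff.mpr (Nat.succ_ne_zero _))
    fun k => N (hasseDeriv k f) * r ^ k

section nr
variable (habv : IsNonarchAbs abv) {N : Polynomial K → ℝ} (hN : IsMultSeminorm abv N)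
include habv hN

theorem le_nr (r : ℝ) (f : Polynomial K) (k : ℕ) :
    N (hasseDeriv k f) * r ^ k ≤ nr N r f := by
  by_cases hk : k ≤ f.natDegree
  · exact Finset.le_sup' (fun k => N (hasseDeriv k f) * r ^ k)
      (Finset.mem_range.mpr (Nat.lt_succ_of_le hk))
  · rw [hasseDeriv_eq_zero_of_lt_natDegree _ _ (by omega), n_zero habv hN, zero_mul]
    calc (0:ℝ) = N (hasseDeriv 0 f) * r ^ 0 * 0 := by ring
    _ ≤ N (hasseDeriv 0 f) * r ^ 0 := by
        simp [hasseDeriv_zero']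
        exact hN.1 f
    _ ≤ nr N r f := Finset.le_sup' (fun k => N (hasseDeriv k f) * r ^ k)
        (Finset.mem_range.mpr (Nat.lt_succ_of_le (Nat.zero_le _)))

theorem nr_le {r B : ℝ} {f : Polynomial K}
    (h : ∀ k, k ≤ f.natDegree → N (hasseDeriv k f) * r ^ k ≤ B) : nr N r f ≤ B :=
  Finset.sup'_le _ _ fun k hk => h k (by simpa [Nat.lt_succ_iff] using Finset.mem_range.mp hk)

theorem exists_nr (r : ℝ) (f : Polynomial K) :
    ∃ k ≤ f.natDegree, nr N r f = N (hasseDeriv k f) * r ^ k := by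
  obtain ⟨k, hk, he⟩ := Finset.exists_mem_eq_sup' (s := Finset.range (f.natDegree + 1))
    (Finset.nonempty_range_iff.mpr (Nat.succ_ne_zero _)) (fun k => N (hasseDeriv k f) * r ^ k)
  exact ⟨k, by simpa [Nat.lt_succ_iff] using Finset.mem_range.mp hk, he⟩

theorem n_le_nr (r : ℝ) (f : Polynomial K) : N f ≤ nr N r f := by
  have := le_nr habv hN r f 0
  simpa [hasseDeriv_zero'] using this

theorem nr_nonneg (r : ℝ) (f : Polynomial K) : 0 ≤ nr N r f :=
  le_trans (hN.1 f) (n_le_nr habv hN r f)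

theorem nr_C (r : ℝ) (c : K) : nr N r (C c) = abv c := by
  apply le_antisymm
  · apply nr_le habv hN
    intro k hk
    have hk0 : k = 0 := by simpa [natDegree_C] using hk
    subst hk0
    simp [hasseDeriv_zero', hN.2.1]
  · have := n_le_nr habv hN r (C c)
    rwa [hN.2.1] at this

theorem nr_at_zero (f : Polynomial K) : nr N 0 f = N f := by
  apply le_antisymm
  · apply nr_le habv hN
    intro k _
    cases k with
    | zero => simp [hasseDeriv_zero']
    | succ j =>
      rw [zero_pow (Nat.succ_ne_zero j), mul_zero]
      exact hN.1 f
  · exact n_le_nr habv hN 0 f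

theorem nr_X_sub_C {r : ℝ} (hr : 0 ≤ r) (a : K) :
    nr N r (X - C a) = max (N (X - C a)) r := by
  apply le_antisymm
  · apply nr_le habv hN
    intro k hk
    rw [natDegree_X_sub_C] at hk
    interval_cases k
    · simpa [hasseDeriv_zero'] using le_max_left _ _
    · rw [hasseDeriv_one', derivative_X_sub_C, n_one habv hN, pow_one, one_mul]
      exact le_max_right _ _
  · apply max_le
    · exact n_le_nr habv hN r _
    · have := le_nr habv hN r (X - C a) 1
      rwa [hasseDeriv_one', derivative_X_sub_C, n_one habv hN, pow_one, one_mul] at this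

theorem nr_pos {r : ℝ} (hr : 0 < r) {f : Polynomial K} (hf : f ≠ 0) : 0 < nr N r f := by
  have h1 : 0 < abv f.leadingCoeff := by
    rcases eq_or_lt_of_le (habv.1 f.leadingCoeff) with h | h
    · exact absurd ((habv.2.1 _).mp h.symm) (leadingCoeff_ne_zero.mpr hf)
    · exact h
  calc (0:ℝ) < abv f.leadingCoeff * r ^ f.natDegree := by positivity
  _ = N (hasseDeriv f.natDegree f) * r ^ f.natDegree := by rw [hd_natDegree, hN.2.1]
  _ ≤ nr N r f := le_nr habv hN r f _

theorem nr_nonarch {r : ℝ} (hr : 0 ≤ r) (f g : Polynomial K) :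
    nr N r (f + g) ≤ max (nr N r f) (nr N r g) := by
  apply nr_le habv hN
  intro k _
  rw [map_add]
  calc N (hasseDeriv k f + hasseDeriv k g) * r ^ k
      ≤ max (N (hasseDeriv k f)) (N (hasseDeriv k g)) * r ^ k :=
        mul_le_mul_of_nonneg_right (n_nonarch habv hN _ _) (pow_nonneg hr k)
  _ = max (N (hasseDeriv k f) * r ^ k) (N (hasseDeriv k g) * r ^ k) :=
        max_mul_of_nonneg _ _ (pow_nonneg hr k)
  _ ≤ max (nr N r f) (nr N r g) :=
        max_le_max (le_nr habv hN r f k) (le_nr habv hN r g k)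

theorem nr_mul {r : ℝ} (hr : 0 ≤ r) (f g : Polynomial K) :
    nr N r (f * g) = nr N r f * nr N r g := by
  rcases eq_or_lt_of_le hr with hr0 | hr0
  · rw [← hr0, nr_at_zero habv hN, nr_at_zero habv hN, nr_at_zero habv hN, hN.2.2.2]
  by_cases hf : f = 0
  · subst hf
    rw [zero_mul, show nr N r 0 = 0 by rw [← C_0, nr_C habv hN, abv_zero' habv], zero_mul]
  by_cases hg : g = 0
  · subst hg
    rw [mul_zero, show nr N r 0 = 0 by rw [← C_0, nr_C habv hN, abv_zero' habv], mul_zero]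
  have hfg : f * g ≠ 0 := mul_ne_zero hf hg
  have hposf : 0 < nr N r f := nr_pos habv hN hr0 hf
  have hposg : 0 < nr N r g := nr_pos habv hN hr0 hg
  apply le_antisymm
  · apply nr_le habv hN
    intro k _
    rw [hasseDeriv_mul]
    apply n_sum_le_mul habv hN (pow_nonneg hr k) (by positivity)
    rintro ⟨i, j⟩ hij
    rw [Finset.HasAntidiagonal.mem_antidiagonal] at hij
    have : r ^ k = r ^ i * r ^ j := by rw [← pow_add, hij]
    rw [this, hN.2.2.2]
    calc N (hasseDeriv i f) * N (hasseDeriv j g) * (r ^ i * r ^ j)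
        = (N (hasseDeriv i f) * r ^ i) * (N (hasseDeriv j g) * r ^ j) := by ring
    _ ≤ nr N r f * nr N r g := by
        apply mul_le_mul (le_nr habv hN r f i) (le_nr habv hN r g j)
          (mul_nonneg (hN.1 _) (pow_nonneg hr j)) (le_of_lt hposf)
  · -- the leading term argument
    classical
    obtain ⟨kw, hkw, hkweq⟩ := exists_nr habv hN r f
    obtain ⟨lw, hlw, hlweq⟩ := exists_nr habv hN r g
    set Sf := (Finset.range (f.natDegree + 1)).filter
      (fun k => N (hasseDeriv k f) * r ^ k = nr N r f) with hSf
    set Sg := (Finset.range (g.natDegree + 1)).filter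
      (fun k => N (hasseDeriv k g) * r ^ k = nr N r g) with hSg
    have hSfne : Sf.Nonempty :=
      ⟨kw, Finset.mem_filter.mpr ⟨Finset.mem_range.mpr (by omega), hkweq.symm⟩⟩
    have hSgne : Sg.Nonempty :=
      ⟨lw, Finset.mem_filter.mpr ⟨Finset.mem_range.mpr (by omega), hlweq.symm⟩⟩
    set k0 := Sf.max' hSfne with hk0def
    set l0 := Sg.max' hSgne with hl0def
    have hk0mem := Finset.mem_filter.mp (Sf.max'_mem hSfne)
    have hl0mem := Finset.mem_filter.mp (Sg.max'_mem hSgne)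
    have hk0d : k0 ≤ f.natDegree := by
      have := Finset.mem_range.mp hk0mem.1; omega
    have hl0d : l0 ≤ g.natDegree := by
      have := Finset.mem_range.mp hl0mem.1; omega
    have hk0eq : N (hasseDeriv k0 f) * r ^ k0 = nr N r f := hk0mem.2
    have hl0eq : N (hasseDeriv l0 g) * r ^ l0 = nr N r g := hl0mem.2
    have hfstrict : ∀ i, k0 < i → N (hasseDeriv i f) * r ^ i < nr N r f := by
      intro i hi
      by_cases hid : i ≤ f.natDegree
      · rcases eq_or_lt_of_le (le_nr habv hN r f i) with he | hlt
        · exfalso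
          have : i ∈ Sf := Finset.mem_filter.mpr ⟨Finset.mem_range.mpr (by omega), he⟩
          have := Finset.le_max' Sf i this
          omega
        · exact hlt
      · rw [hasseDeriv_eq_zero_of_lt_natDegree _ _ (by omega), n_zero habv hN, zero_mul]
        exact nr_pos habv hN hr0 hf
    have hgstrict : ∀ j, l0 < j → N (hasseDeriv j g) * r ^ j < nr N r g := by
      intro j hj
      by_cases hjd : j ≤ g.natDegree
      · rcases eq_or_lt_of_le (le_nr habv hN r g j) with he | hlt
        · exfalso
          have : j ∈ Sg := Finset.mem_filter.mpr ⟨Finset.mem_range.mpr (by omega), he⟩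
          have := Finset.le_max' Sg j this
          omega
        · exact hlt
      · rw [hasseDeriv_eq_zero_of_lt_natDegree _ _ (by omega), n_zero habv hN, zero_mul]
        exact nr_pos habv hN hr0 hg
    -- the main term
    have hmem : (k0, l0) ∈ Finset.HasAntidiagonal.antidiagonal (k0 + l0) := Finset.HasAntidiagonal.mem_antidiagonal.mpr rfl
    have hsplit : hasseDeriv (k0 + l0) (f * g) =
        hasseDeriv k0 f * hasseDeriv l0 g +
          ∑ ij ∈ (Finset.HasAntidiagonal.antidiagonal (k0 + l0)).erase (k0, l0),
            hasseDeriv ij.1 f * hasseDeriv ij.2 g := by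
      rw [hasseDeriv_mul]
      exact (Finset.add_sum_erase _ _ hmem).symm
    have hmain : N (hasseDeriv k0 f * hasseDeriv l0 g) * r ^ (k0 + l0) =
        nr N r f * nr N r g := by
      rw [hN.2.2.2, pow_add]
      calc N (hasseDeriv k0 f) * N (hasseDeriv l0 g) * (r ^ k0 * r ^ l0)
          = (N (hasseDeriv k0 f) * r ^ k0) * (N (hasseDeriv l0 g) * r ^ l0) := by ring
      _ = nr N r f * nr N r g := by rw [hk0eq, hl0eq]
    have hrest : N (∑ ij ∈ (Finset.HasAntidiagonal.antidiagonal (k0 + l0)).erase (k0, l0),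
        hasseDeriv ij.1 f * hasseDeriv ij.2 g) * r ^ (k0 + l0) < nr N r f * nr N r g := by
      apply n_sum_lt_mul habv hN (pow_nonneg hr _) (by positivity)
      rintro ⟨i, j⟩ hij
      have hij1 := Finset.HasAntidiagonal.mem_antidiagonal.mp (Finset.mem_of_mem_erase hij)
      have hij2 : (i, j) ≠ (k0, l0) := Finset.ne_of_mem_erase hij
      have hcase : k0 < i ∨ l0 < j := by
        by_contra hcon
        push_neg at hcon
        have : i = k0 ∧ j = l0 := by omega
        exact hij2 (by simp [this.1, this.2])
      have hrw : r ^ (k0 + l0) = r ^ i * r ^ j := by rw [← pow_add, hij1]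
      rw [hrw, hN.2.2.2]
      have hre : N (hasseDeriv i f) * N (hasseDeriv j g) * (r ^ i * r ^ j)
          = (N (hasseDeriv i f) * r ^ i) * (N (hasseDeriv j g) * r ^ j) := by ring
      rw [hre]
      rcases hcase with hcase | hcase
      · calc (N (hasseDeriv i f) * r ^ i) * (N (hasseDeriv j g) * r ^ j)
            ≤ (N (hasseDeriv i f) * r ^ i) * nr N r g :=
              mul_le_mul_of_nonneg_left (le_nr habv hN r g j)
                (mul_nonneg (hN.1 _) (pow_nonneg hr i))
        _ < nr N r f * nr N r g :=
              mul_lt_mul_of_pos_right (hfstrict i hcase) hposg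
      · calc (N (hasseDeriv i f) * r ^ i) * (N (hasseDeriv j g) * r ^ j)
            ≤ nr N r f * (N (hasseDeriv j g) * r ^ j) :=
              mul_le_mul_of_nonneg_right (le_nr habv hN r f i)
                (mul_nonneg (hN.1 _) (pow_nonneg hr j))
        _ < nr N r f * nr N r g :=
              mul_lt_mul_of_pos_left (hgstrict j hcase) hposf
    have hval : N (hasseDeriv (k0 + l0) (f * g)) * r ^ (k0 + l0) = nr N r f * nr N r g := by
      rw [hsplit]
      have hlt : N (∑ ij ∈ (Finset.HasAntidiagonal.antidiagonal (k0 + l0)).erase (k0, l0),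
          hasseDeriv ij.1 f * hasseDeriv ij.2 g) < N (hasseDeriv k0 f * hasseDeriv l0 g) := by
        have hrpos : 0 < r ^ (k0 + l0) := pow_pos hr0 _
        have := hrest
        rw [← hmain] at this
        exact lt_of_mul_lt_mul_right this (le_of_lt hrpos)
      rw [n_add_eq_left habv hN hlt]
      exact hmain
    rw [← hval]
    exact le_nr habv hN r (f * g) _

theorem nr_isMultSeminorm {r : ℝ} (hr : 0 ≤ r) : IsMultSeminorm abv (nr N r) := by
  refine ⟨nr_nonneg habv hN r, nr_C habv hN r, ?_, fun f g => nr_mul habv hN hr f g⟩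
  intro f g
  apply le_trans (nr_nonarch habv hN hr f g)
  apply max_le
  · exact le_add_of_nonneg_right (nr_nonneg habv hN r g)
  · exact le_add_of_nonneg_left (nr_nonneg habv hN r f)

theorem nr_nr [IsAlgClosed K] {r s : ℝ} (hr : 0 ≤ r) (hs : 0 ≤ s) :
    nr (nr N r) s = nr N (max r s) := by
  apply n_ext habv (nr_isMultSeminorm habv (nr_isMultSeminorm habv hN hr) hs)
    (nr_isMultSeminorm habv hN (le_trans hr (le_max_left r s)))
  intro a
  rw [nr_X_sub_C habv (nr_isMultSeminorm habv hN hr) hs,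
    nr_X_sub_C habv hN hr, nr_X_sub_C habv hN (le_trans hr (le_max_left r s)), max_assoc]

end nr

theorem continuous_finset_sup' {ι : Type*} (s : Finset ι) (hs : s.Nonempty) (F : ι → ℝ → ℝ)
    (hF : ∀ i, Continuous (F i)) : Continuous fun r => s.sup' hs fun i => F i r := by
  classical
  induction hs using Finset.Nonempty.cons_induction with
  | singleton i => simpa using hF i
  | cons a t ha ht ih =>
    have : (fun r => (Finset.cons a t ha).sup' (Finset.cons_nonempty ha) fun i => F i r)
        = fun r => max (F a r) (t.sup' ht fun i => F i r) := by
      funext r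
      rw [Finset.sup'_cons ht]
    rw [this]
    exact (hF a).max ih

theorem nr_continuous (N : Polynomial K → ℝ) (f : Polynomial K) :
    Continuous fun r => nr N r f := by
  apply continuous_finset_sup'
  intro k
  exact continuous_const.mul (continuous_pow k)

/-! ### Values on linear polynomials, radius, merge point -/

section linear
variable [IsAlgClosed K] (habv : IsNonarchAbs abv)
include habv

/-- `L1`: if `N(X - c) ≤ t` then the point `nr N t` is the "disk" of center `c`, radius `t`. -/
theorem nr_linear_formula {N : Polynomial K → ℝ} (hN : IsMultSeminorm abv N)
    {t : ℝ} (ht : 0 ≤ t) {c : K} (hc : N (X - C c) ≤ t) (a : K) :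
    nr N t (X - C a) = max (abv (c - a)) t := by
  have hxa : (X : K[X]) - C a = (X - C c) + C (c - a) := by
    rw [map_sub]; ring
  rcases le_or_gt (abv (c - a)) t with h | h
  · have h1 : N (X - C a) ≤ t := by
      rw [hxa]
      apply le_trans (n_nonarch habv hN _ _)
      apply max_le hc
      rw [hN.2.1]; exact h
    rw [nr_X_sub_C habv hN ht, max_eq_right h1, max_eq_right h]
  · have h2 : N (X - C a) = abv (c - a) := by
      rw [hxa, add_comm]
      rw [n_add_eq_left habv hN (by rw [hN.2.1]; exact lt_of_le_of_lt hc h), hN.2.1]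
    rw [nr_X_sub_C habv hN ht, h2]

/-- `L2`: two points whose distance to a common center is `≤ t` merge at level `t`. -/
theorem nr_eq_of_both_le {N N' : Polynomial K → ℝ}
    (hN : IsMultSeminorm abv N) (hN' : IsMultSeminorm abv N')
    {t : ℝ} (ht : 0 ≤ t) {c : K} (hc : N (X - C c) ≤ t) (hc' : N' (X - C c) ≤ t) :
    nr N t = nr N' t := by
  apply n_ext habv (nr_isMultSeminorm habv hN ht) (nr_isMultSeminorm habv hN' ht)
  intro a
  rw [nr_linear_formula habv hN ht hc a, nr_linear_formula habv hN' ht hc' a]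

end linear

noncomputable def rho (N : Polynomial K → ℝ) : ℝ :=
  sInf (Set.range fun a : K => N (X - C a))

section rho
variable (habv : IsNonarchAbs abv) {N : Polynomial K → ℝ} (hN : IsMultSeminorm abv N)
include habv hN

theorem rho_bddBelow : BddBelow (Set.range fun a : K => N (X - C a)) :=
  ⟨0, by rintro x ⟨a, rfl⟩; exact hN.1 _⟩

theorem rho_nonneg : 0 ≤ rho N :=
  le_csInf (Set.range_nonempty _) (by rintro x ⟨a, rfl⟩; exact hN.1 _)

theorem rho_le (a : K) : rho N ≤ N (X - C a) :=
  csInf_le (rho_bddBelow habv hN) ⟨a, rfl⟩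

theorem exists_lt_of_rho_lt {s : ℝ} (hs : rho N < s) : ∃ a : K, N (X - C a) < s := by
  obtain ⟨x, ⟨a, rfl⟩, hx⟩ := exists_lt_of_csInf_lt (Set.range_nonempty _) hs
  exact ⟨a, hx⟩

theorem nr_eq_self [IsAlgClosed K] {r : ℝ} (hr : 0 ≤ r) (hrho : r ≤ rho N) : nr N r = N := by
  apply n_ext habv (nr_isMultSeminorm habv hN hr) hN
  intro a
  rw [nr_X_sub_C habv hN hr]
  exact max_eq_left (le_trans hrho (rho_le habv hN a))

theorem nr_ne {r s : ℝ} (hr : 0 ≤ r) (hrs : r < s) (hrho : rho N < s) :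
    nr N r ≠ nr N s := by
  obtain ⟨a, ha⟩ := exists_lt_of_rho_lt habv hN hrho
  intro heq
  have h1 := congrFun heq (X - C a)
  rw [nr_X_sub_C habv hN hr, nr_X_sub_C habv hN (le_trans hr (le_of_lt hrs))] at h1
  have h2 : max (N (X - C a)) r < s := max_lt ha hrs
  rw [h1] at h2
  exact absurd (le_max_right (N (X - C a)) s) (not_le.mpr h2)

end rho

def mergeSet (N N' : Polynomial K → ℝ) : Set ℝ := {r | 0 ≤ r ∧ nr N r = nr N' r}

noncomputable def mergeR (N N' : Polynomial K → ℝ) : ℝ := sInf (mergeSet N N')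

theorem mergeSet_comm (N N' : Polynomial K → ℝ) : mergeSet N N' = mergeSet N' N := by
  ext r; exact and_congr Iff.rfl eq_comm

theorem mergeR_comm (N N' : Polynomial K → ℝ) : mergeR N N' = mergeR N' N := by
  unfold mergeR; rw [mergeSet_comm]

section merge
variable [IsAlgClosed K] (habv : IsNonarchAbs abv) {N N' : Polynomial K → ℝ}
  (hN : IsMultSeminorm abv N) (hN' : IsMultSeminorm abv N')
include habv hN hN'

theorem mergeSet_nonempty : (mergeSet N N').Nonempty := by
  refine ⟨max (max (N X) (N' X)) 0, le_max_right _ _, ?_⟩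
  have h0 : (X : K[X]) - C 0 = X := by simp
  apply nr_eq_of_both_le habv hN hN' (le_max_right _ _) (c := 0)
  · rw [h0]; exact le_trans (le_max_left _ _) (le_max_left _ _)
  · rw [h0]; exact le_trans (le_max_right _ _) (le_max_left _ _)

theorem mergeSet_bddBelow : BddBelow (mergeSet N N') := ⟨0, fun r hr => hr.1⟩

theorem mergeSet_upward {r s : ℝ} (h : r ∈ mergeSet N N') (hrs : r ≤ s) :
    s ∈ mergeSet N N' := by
  have hs : 0 ≤ s := le_trans h.1 hrs
  refine ⟨hs, ?_⟩
  calc nr N s = nr N (max r s) := by rw [max_eq_right hrs]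
  _ = nr (nr N r) s := (nr_nr habv hN h.1 hs).symm
  _ = nr (nr N' r) s := by rw [h.2]
  _ = nr N' (max r s) := nr_nr habv hN' h.1 hs
  _ = nr N' s := by rw [max_eq_right hrs]

theorem mergeR_nonneg : 0 ≤ mergeR N N' :=
  le_csInf (mergeSet_nonempty habv hN hN') fun r hr => hr.1

theorem mem_mergeSet_of_lt {r : ℝ} (h : mergeR N N' < r) : r ∈ mergeSet N N' := by
  obtain ⟨s, hs, hsr⟩ := (csInf_lt_iff (mergeSet_bddBelow habv hN hN')
    (mergeSet_nonempty habv hN hN')).mp h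
  exact mergeSet_upward habv hN hN' hs (le_of_lt hsr)

theorem mergeR_mem : mergeR N N' ∈ mergeSet N N' := by
  refine ⟨mergeR_nonneg habv hN hN', ?_⟩
  funext f
  set m := mergeR N N' with hm
  have hu : Tendsto (fun n : ℕ => m + 1 / ((n : ℝ) + 1)) atTop (nhds m) := by
    have := Filter.Tendsto.const_add m tendsto_one_div_add_atTop_nhds_zero_nat
    simpa using this
  have h1 : Tendsto (fun n : ℕ => nr N (m + 1 / ((n : ℝ) + 1)) f) atTop (nhds (nr N m f)) :=
    ((nr_continuous N f).tendsto m).comp hu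
  have h2 : Tendsto (fun n : ℕ => nr N' (m + 1 / ((n : ℝ) + 1)) f) atTop (nhds (nr N' m f)) :=
    ((nr_continuous N' f).tendsto m).comp hu
  have heq : (fun n : ℕ => nr N (m + 1 / ((n : ℝ) + 1)) f)
      = fun n : ℕ => nr N' (m + 1 / ((n : ℝ) + 1)) f := by
    funext n
    have hmem : m + 1 / ((n : ℝ) + 1) ∈ mergeSet N N' := by
      apply mem_mergeSet_of_lt habv hN hN'
      have : (0:ℝ) < 1 / ((n : ℝ) + 1) := by positivity
      linarith
    exact congrFun hmem.2 f
  rw [heq] at h1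
  exact tendsto_nhds_unique h1 h2

theorem mergeR_le {r : ℝ} (h : r ∈ mergeSet N N') : mergeR N N' ≤ r :=
  csInf_le (mergeSet_bddBelow habv hN hN') h

end merge

/-! ### Separation -/

section sep
variable [IsAlgClosed K] (habv : IsNonarchAbs abv) {N N' : Polynomial K → ℝ}
  (hN : IsMultSeminorm abv N) (hN' : IsMultSeminorm abv N')
include habv hN hN'

theorem sep {t : ℝ} {c : K} (ht0 : 0 ≤ t) (htm : t ≤ mergeR N N')
    (hc : N (X - C c) < t) (hzne : nr N t ≠ N')
    {S : Set (BerkLine K abv)} (hS : IsPreconnected S)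
    (hxi : (⟨N, hN⟩ : BerkLine K abv) ∈ S) (hxi' : (⟨N', hN'⟩ : BerkLine K abv) ∈ S) :
    (⟨nr N t, nr_isMultSeminorm habv hN ht0⟩ : BerkLine K abv) ∈ S := by
  by_contra hzs
  set ζ : BerkLine K abv := ⟨nr N t, nr_isMultSeminorm habv hN ht0⟩ with hζ
  have hcont : ∀ p : K[X], Continuous fun σ : BerkLine K abv => σ.1 p :=
    fun p => (continuous_apply p).comp continuous_subtype_val
  set U : Set (BerkLine K abv) := {σ | σ.1 (X - C c) < t} with hU
  set V : Set (BerkLine K abv) :=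
    {σ | t < σ.1 (X - C c)} ∪ ⋃ (b : K) (_ : t ≤ abv (b - c)), {σ | σ.1 (X - C b) < t} with hV
  have hUopen : IsOpen U := isOpen_Iio.preimage (hcont (X - C c))
  have hVopen : IsOpen V := by
    apply IsOpen.union (isOpen_Ioi.preimage (hcont (X - C c)))
    exact isOpen_iUnion fun b => isOpen_iUnion fun _ => isOpen_Iio.preimage (hcont (X - C b))
  have hζlin : ∀ a : K, nr N t (X - C a) = max (abv (c - a)) t :=
    nr_linear_formula habv hN ht0 (le_of_lt hc)
  have hζc : ζ.1 (X - C c) = t := by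
    show nr N t (X - C c) = t
    rw [hζlin c, sub_self, abv_zero' habv, max_eq_right ht0]
  have hζU : ζ ∉ U := by
    rw [hU, Set.mem_setOf_eq, hζc]; exact lt_irrefl t
  have hζV : ζ ∉ V := by
    rw [hV]
    rintro (h1 | h1)
    · rw [Set.mem_setOf_eq, hζc] at h1; exact lt_irrefl t h1
    · obtain ⟨b, hb⟩ := Set.mem_iUnion.mp h1
      obtain ⟨hbt, hbv⟩ := Set.mem_iUnion.mp hb
      rw [Set.mem_setOf_eq] at hbv
      have : ζ.1 (X - C b) = max (abv (c - b)) t := hζlin b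
      rw [this, show c - b = -(b - c) by ring, abv_neg' habv] at hbv
      exact absurd (le_max_of_le_left hbt) (not_le.mpr hbv)
  have hcover : ∀ σ : BerkLine K abv, σ ∉ U → σ ∉ V → σ = ζ := by
    intro σ hσU hσV
    rw [hU, Set.mem_setOf_eq, not_lt] at hσU
    have hσ1 : ¬ t < σ.1 (X - C c) := fun h => hσV (Or.inl h)
    have hσ2 : ∀ b : K, t ≤ abv (b - c) → t ≤ σ.1 (X - C b) := fun b hb => by
      by_contra hlt
      push_neg at hlt
      exact hσV (Or.inr (Set.mem_iUnion.mpr ⟨b, Set.mem_iUnion.mpr ⟨hb, hlt⟩⟩))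
    have hσc : σ.1 (X - C c) = t := le_antisymm (not_lt.mp hσ1) hσU
    have hclaim : ∀ a : K, σ.1 (X - C a) = max (abv (c - a)) t := by
      intro a
      have hxa : (X : K[X]) - C a = (X - C c) + C (c - a) := by rw [map_sub]; ring
      rcases lt_or_ge t (abv (c - a)) with h | h
      · have hval : σ.1 (X - C a) = abv (c - a) := by
          rw [hxa, add_comm, n_add_eq_left habv σ.2 (by rw [hσc, σ.2.2.1]; exact h), σ.2.2.1]
        rw [hval, max_eq_left (le_of_lt h)]
      · have hup : σ.1 (X - C a) ≤ t := by
          rw [hxa]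
          refine le_trans (n_nonarch habv σ.2 _ _) (max_le (le_of_eq hσc) ?_)
          rw [σ.2.2.1]; exact h
        have hdown : t ≤ σ.1 (X - C a) := by
          rcases le_or_gt t (abv (a - c)) with h2 | h2
          · exact hσ2 a h2
          · by_contra hlt
            push_neg at hlt
            have hcc : (X : K[X]) - C c = (X - C a) + C (a - c) := by rw [map_sub]; ring
            have hb2 : σ.1 (X - C c) ≤ max (σ.1 (X - C a)) (σ.1 (C (a - c))) := by
              rw [hcc]; exact n_nonarch habv σ.2 _ _
            rw [hσc, σ.2.2.1] at hb2
            exact absurd hb2 (not_le.mpr (max_lt hlt h2))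
        rw [le_antisymm hup hdown, max_eq_right h]
    apply Subtype.ext
    exact n_ext habv σ.2 (nr_isMultSeminorm habv hN ht0) fun a => by
      rw [hclaim a, ← hζlin a]
  have hxiU : (⟨N, hN⟩ : BerkLine K abv) ∈ U := hc
  have hN'c : t ≤ N' (X - C c) := by
    by_contra hlt
    push_neg at hlt
    have hs0m : max (max (N (X - C c)) (N' (X - C c))) 0 ∈ mergeSet N N' := by
      refine ⟨le_max_right _ _, ?_⟩
      exact nr_eq_of_both_le habv hN hN' (le_max_right _ _)
        (le_trans (le_max_left _ _) (le_max_left _ _))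
        (le_trans (le_max_right _ _) (le_max_left _ _))
    have h1 : mergeR N N' ≤ max (max (N (X - C c)) (N' (X - C c))) 0 :=
      mergeR_le habv hN hN' hs0m
    have h2 : max (max (N (X - C c)) (N' (X - C c))) 0 < t :=
      max_lt (max_lt hc hlt) (lt_of_le_of_lt (hN.1 _) hc)
    linarith
  have hxi'V : (⟨N', hN'⟩ : BerkLine K abv) ∈ V := by
    by_contra hnV
    have hnU : (⟨N', hN'⟩ : BerkLine K abv) ∉ U := by
      rw [hU, Set.mem_setOf_eq]; exact not_lt.mpr hN'c
    exact hzne (congrArg Subtype.val (hcover _ hnU hnV)).symm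
  have hsub : S ⊆ U ∪ V := by
    intro σ hσ
    by_cases h1 : σ ∈ U
    · exact Or.inl h1
    by_cases h2 : σ ∈ V
    · exact Or.inr h2
    exact absurd (hcover σ h1 h2 ▸ hσ) hzs
  obtain ⟨σ, hσS, hσU, hσV⟩ := hS U V hUopen hVopen hsub ⟨_, hxi, hxiU⟩ ⟨_, hxi', hxi'V⟩
  rw [hU, Set.mem_setOf_eq] at hσU
  rw [hV] at hσV
  rcases hσV with h | h
  · rw [Set.mem_setOf_eq] at h; linarith
  · obtain ⟨b, hb⟩ := Set.mem_iUnion.mp h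
    obtain ⟨hbt, hbv⟩ := Set.mem_iUnion.mp hb
    rw [Set.mem_setOf_eq] at hbv
    have he : (C (b - c) : K[X]) = (X - C c) + -(X - C b) := by
      rw [map_sub]; ring
    have hbc : abv (b - c) ≤ max (σ.1 (X - C c)) (σ.1 (X - C b)) := by
      calc abv (b - c) = σ.1 (C (b - c)) := (σ.2.2.1 _).symm
      _ = σ.1 ((X - C c) + -(X - C b)) := by rw [← he]
      _ ≤ max (σ.1 (X - C c)) (σ.1 (-(X - C b))) := n_nonarch habv σ.2 _ _
      _ = max (σ.1 (X - C c)) (σ.1 (X - C b)) := by rw [n_neg habv σ.2]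
    exact absurd hbt (not_le.mpr (lt_of_le_of_lt hbc (max_lt hσU hbv)))

end sep

section arc
variable [IsAlgClosed K] (habv : IsNonarchAbs abv) {N N' : Polynomial K → ℝ}
  (hN : IsMultSeminorm abv N) (hN' : IsMultSeminorm abv N')
include habv hN hN'

theorem contain {r : ℝ} (h0 : 0 ≤ r) (hrm : r ≤ mergeR N N')
    {S : Set (BerkLine K abv)} (hS : IsPreconnected S)
    (hxi : (⟨N, hN⟩ : BerkLine K abv) ∈ S) (hxi' : (⟨N', hN'⟩ : BerkLine K abv) ∈ S) :
    (⟨nr N r, nr_isMultSeminorm habv hN h0⟩ : BerkLine K abv) ∈ S := by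
  by_cases h1 : nr N r = N
  · have he : (⟨nr N r, nr_isMultSeminorm habv hN h0⟩ : BerkLine K abv) = ⟨N, hN⟩ :=
      Subtype.ext h1
    rw [he]; exact hxi
  by_cases h2 : nr N r = N'
  · have he : (⟨nr N r, nr_isMultSeminorm habv hN h0⟩ : BerkLine K abv) = ⟨N', hN'⟩ :=
      Subtype.ext h2
    rw [he]; exact hxi'
  have hrho : rho N < r := by
    by_contra hle
    push_neg at hle
    exact h1 (nr_eq_self habv hN h0 hle)
  obtain ⟨c, hc⟩ := exists_lt_of_rho_lt habv hN hrho
  exact sep habv hN hN' h0 hrm hc h2 hS hxi hxi'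

theorem main_arc (hne : N ≠ N') :
    ∃ γ : unitInterval → BerkLine K abv,
      Continuous γ ∧ Function.Injective γ ∧ γ 0 = ⟨N, hN⟩ ∧ γ 1 = ⟨N', hN'⟩ ∧
      ∀ u : unitInterval, ∃ r, 0 ≤ r ∧ r ≤ mergeR N N' ∧
        ((γ u).1 = nr N r ∨ (γ u).1 = nr N' r) := by
  classical
  set m := mergeR N N' with hm
  have hm0 : 0 ≤ m := mergeR_nonneg habv hN hN'
  have hmm : nr N m = nr N' m := (mergeR_mem habv hN hN').2
  set a := min (rho N) m with hadef
  set b := min (rho N') m with hbdef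
  have ha0 : 0 ≤ a := le_min (rho_nonneg habv hN) hm0
  have hb0 : 0 ≤ b := le_min (rho_nonneg habv hN') hm0
  have ham : a ≤ m := min_le_right _ _
  have hbm : b ≤ m := min_le_right _ _
  have hnra : nr N a = N := nr_eq_self habv hN ha0 (min_le_left _ _)
  have hnrb : nr N' b = N' := nr_eq_self habv hN' hb0 (min_le_left _ _)
  have hnot : ¬(m ≤ rho N ∧ m ≤ rho N') := by
    rintro ⟨h1, h2⟩
    apply hne
    calc N = nr N m := (nr_eq_self habv hN hm0 h1).symm
    _ = nr N' m := hmm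
    _ = N' := nr_eq_self habv hN' hm0 h2
  set T := (m - a) + (m - b) with hT
  have hTpos : 0 < T := by
    rcases not_and_or.mp hnot with h | h
    · push_neg at h
      have : a < m := by rw [hadef]; rw [min_lt_iff]; left; exact h
      have h2 : 0 ≤ m - b := by linarith
      rw [hT]; nlinarith
    · push_neg at h
      have : b < m := by rw [hbdef]; rw [min_lt_iff]; left; exact h
      have h2 : 0 ≤ m - a := by linarith
      rw [hT]; nlinarith
  -- branch injectivity
  have hbranchN : ∀ r s : ℝ, a ≤ r → r < s → s ≤ m → nr N r ≠ nr N s := by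
    intro r s h1 h2 h3
    have hrho : rho N < s := by
      rcases le_or_gt (rho N) m with hc | hc
      · have he : a = rho N := min_eq_left hc
        rw [he] at h1; linarith
      · have he : a = m := min_eq_right (le_of_lt hc)
        exfalso; rw [he] at h1; linarith
    exact nr_ne habv hN (le_trans ha0 h1) h2 hrho
  have hbranchN' : ∀ r s : ℝ, b ≤ r → r < s → s ≤ m → nr N' r ≠ nr N' s := by
    intro r s h1 h2 h3
    have hrho : rho N' < s := by
      rcases le_or_gt (rho N') m with hc | hc
      · have he : b = rho N' := min_eq_left hc
        rw [he] at h1; linarith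
      · have he : b = m := min_eq_right (le_of_lt hc)
        exfalso; rw [he] at h1; linarith
    exact nr_ne habv hN' (le_trans hb0 h1) h2 hrho
  have hcross : ∀ r s : ℝ, a ≤ r → r ≤ m → b ≤ s → s ≤ m → nr N r = nr N' s →
      r = m ∧ s = m := by
    intro r s har hrm hbs hsm heq
    have h0r : 0 ≤ r := le_trans ha0 har
    have h0s : 0 ≤ s := le_trans hb0 hbs
    have hmax0 : 0 ≤ max r s := le_trans h0r (le_max_left _ _)
    have humem : max r s ∈ mergeSet N N' := by
      refine ⟨hmax0, ?_⟩
      have e1 : nr (nr N r) (max r s) = nr N (max r s) := by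
        rw [nr_nr habv hN h0r hmax0, max_eq_right (le_max_left r s)]
      have e2 : nr (nr N' s) (max r s) = nr N' (max r s) := by
        rw [nr_nr habv hN' h0s hmax0, max_eq_right (le_max_right r s)]
      rw [← e1, heq, e2]
    have hmle : m ≤ max r s := mergeR_le habv hN hN' humem
    have hmax : max r s = m := le_antisymm (max_le hrm hsm) hmle
    have hr : r = m := by
      by_contra hrm'
      have hrlt : r < m := lt_of_le_of_ne hrm hrm'
      have hsm' : s = m := by
        rcases max_cases r s with ⟨he, _⟩ | ⟨he, _⟩
        · rw [he] at hmax; exact absurd hmax hrm'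
        · rw [he] at hmax; exact hmax
      rw [hsm', ← hmm] at heq
      exact hbranchN r m har hrlt le_rfl heq
    refine ⟨hr, ?_⟩
    by_contra hsm'
    have hslt : s < m := lt_of_le_of_ne hsm hsm'
    rw [hr, hmm] at heq
    exact hbranchN' s m hbs hslt le_rfl heq.symm
  -- basic bounds for parameters
  have hxfacts : ∀ u : unitInterval, 0 ≤ (u : ℝ) * T ∧ (u : ℝ) * T ≤ T := by
    intro u
    constructor
    · exact mul_nonneg u.2.1 (le_of_lt hTpos)
    · exact mul_le_of_le_one_left (le_of_lt hTpos) u.2.2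
  -- the arc
  refine ⟨fun u => ⟨if (u : ℝ) * T ≤ m - a then nr N (a + (u : ℝ) * T)
      else nr N' (2 * m - a - (u : ℝ) * T), ?_⟩, ?_, ?_, ?_, ?_, ?_⟩
  · split_ifs with h
    · exact nr_isMultSeminorm habv hN (by have := (hxfacts u).1; linarith)
    · push_neg at h
      have := (hxfacts u).2
      exact nr_isMultSeminorm habv hN' (by linarith)
  · -- continuity
    apply Continuous.subtype_mk
    apply continuous_pi
    intro f
    have happ : ∀ u : unitInterval,
        (if (u : ℝ) * T ≤ m - a then nr N (a + (u : ℝ) * T)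
          else nr N' (2 * m - a - (u : ℝ) * T)) f
        = if (u : ℝ) * T ≤ m - a then nr N (a + (u : ℝ) * T) f
          else nr N' (2 * m - a - (u : ℝ) * T) f := by
      intro u; split_ifs <;> rfl
    simp only [happ]
    have hcu : Continuous fun u : unitInterval => (u : ℝ) * T :=
      continuous_subtype_val.mul continuous_const
    apply Continuous.if_le
    · exact (nr_continuous N f).comp (continuous_const.add hcu)
    · exact (nr_continuous N' f).comp ((continuous_const.sub continuous_const).sub hcu)
    · exact hcu
    · exact continuous_const
    · intro u hu
      rw [hu]
      have e1 : a + (m - a) = m := by ring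
      have e2 : 2 * m - a - (m - a) = m := by ring
      rw [e1, e2, hmm]
  · -- injectivity
    intro u v h
    have hval := congrArg Subtype.val h
    simp only at hval
    have hu := hxfacts u
    have hv := hxfacts v
    have hxy : (u : ℝ) * T = (v : ℝ) * T := by
      split_ifs at hval with h1 h2 h2
      · -- both on the N branch
        rcases lt_trichotomy ((u : ℝ) * T) ((v : ℝ) * T) with hlt | he | hlt
        · exact absurd hval (hbranchN _ _ (by linarith [hu.1]) (by linarith) (by linarith))
        · linarith
        · exact absurd hval.symm (hbranchN _ _ (by linarith [hv.1]) (by linarith) (by linarith))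
      · -- u on N branch, v on N' branch
        push_neg at h2
        have hc := hcross _ _ (by linarith [hu.1]) (by linarith)
          (by linarith [hv.2]) (by linarith) hval
        exfalso
        have : (v : ℝ) * T = m - a := by linarith [hc.2]
        linarith
      · -- u on N' branch, v on N branch
        push_neg at h1
        have hc := hcross _ _ (by linarith [hv.1]) (by linarith)
          (by linarith [hu.2]) (by linarith) hval.symm
        exfalso
        have : (u : ℝ) * T = m - a := by linarith [hc.2]
        linarith
      · -- both on the N' branch
        push_neg at h1 h2
        rcases lt_trichotomy ((u : ℝ) * T) ((v : ℝ) * T) with hlt | he | hlt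
        · exact absurd hval.symm (hbranchN' _ _ (by linarith [hv.2])
            (by linarith) (by linarith))
        · linarith
        · exact absurd hval (hbranchN' _ _ (by linarith [hu.2])
            (by linarith) (by linarith))
    have hcoe : (u : ℝ) = (v : ℝ) := mul_right_cancel₀ (ne_of_gt hTpos) hxy
    exact Subtype.ext hcoe
  · -- γ 0 = ξ
    apply Subtype.ext
    show (if ((0 : unitInterval) : ℝ) * T ≤ m - a then _ else _) = N
    have hz : ((0 : unitInterval) : ℝ) = 0 := rfl
    rw [hz, zero_mul, if_pos (by linarith), add_zero, hnra]
  · -- γ 1 = ξ'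
    apply Subtype.ext
    show (if ((1 : unitInterval) : ℝ) * T ≤ m - a then nr N (a + ((1 : unitInterval) : ℝ) * T)
      else nr N' (2 * m - a - ((1 : unitInterval) : ℝ) * T)) = N'
    have ho : ((1 : unitInterval) : ℝ) = 1 := rfl
    rw [ho, one_mul]
    by_cases hcnd : T ≤ m - a
    · rw [if_pos hcnd]
      have hbem : b = m := by linarith
      have he : a + T = m := by rw [hT, hbem]; ring
      rw [he, hmm, ← hbem, hnrb]
    · rw [if_neg hcnd]
      have he : 2 * m - a - T = b := by rw [hT]; ring
      rw [he, hnrb]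
  · -- range characterization
    intro u
    by_cases hcnd : (u : ℝ) * T ≤ m - a
    · refine ⟨a + (u : ℝ) * T, by linarith [(hxfacts u).1], by linarith, Or.inl ?_⟩
      show (if (u : ℝ) * T ≤ m - a then nr N (a + (u : ℝ) * T)
        else nr N' (2 * m - a - (u : ℝ) * T)) = nr N (a + (u : ℝ) * T)
      rw [if_pos hcnd]
    · push_neg at hcnd
      refine ⟨2 * m - a - (u : ℝ) * T, ?_, by linarith, Or.inr ?_⟩
      · have := (hxfacts u).2; linarith
      · show (if (u : ℝ) * T ≤ m - a then nr N (a + (u : ℝ) * T)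
          else nr N' (2 * m - a - (u : ℝ) * T)) = nr N' (2 * m - a - (u : ℝ) * T)
        rw [if_neg (not_le.mpr hcnd)]

end arc

end BerkAux

open BerkAux in
theorem stmt4 {K : Type*} [Field K] [IsAlgClosed K] (abv : K → ℝ)
    (habv : IsNonarchAbs abv)
    (hnontriv : ∃ x : K, abv x ≠ 0 ∧ abv x ≠ 1)
    (hcomplete : ∀ s : ℕ → K,
      (∀ ε : ℝ, 0 < ε → ∃ N, ∀ m ≥ N, ∀ n ≥ N, abv (s m - s n) < ε) →
      ∃ x : K, ∀ ε : ℝ, 0 < ε → ∃ N, ∀ n ≥ N, abv (s n - x) < ε) :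
    T2Space (BerkLine K abv) ∧
    LocallyCompactSpace (BerkLine K abv) ∧
    (∀ ξ ξ' : BerkLine K abv, ξ ≠ ξ' →
      ∃ γ : unitInterval → BerkLine K abv,
        Continuous γ ∧ Function.Injective γ ∧ γ 0 = ξ ∧ γ 1 = ξ') ∧
    (∀ (ξ ξ' : BerkLine K abv) (γ γ' : unitInterval → BerkLine K abv),
      Continuous γ → Function.Injective γ → γ 0 = ξ → γ 1 = ξ' →
      Continuous γ' → Function.Injective γ' → γ' 0 = ξ → γ' 1 = ξ' →
      Set.range γ = Set.range γ') := by
  refine ⟨inferInstance, ?_, ?_, ?_⟩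
  · -- local compactness
    haveI : WeaklyLocallyCompactSpace (BerkLine K abv) := by
      constructor
      intro ξ
      set R := ξ.1 X + 1 with hR
      have hR0 : 0 ≤ R := by have := ξ.2.1 X; rw [hR]; linarith
      have hRX : ξ.1 X < R := lt_add_one _
      set T : Set (Polynomial K → ℝ) := {g | IsMultSeminorm abv g ∧ g X ≤ R} with hTdef
      have hTsub : T ⊆ Set.pi Set.univ fun f : Polynomial K =>
          Set.Icc (0:ℝ) (∑ i ∈ Finset.range (f.natDegree + 1), abv (f.coeff i) * R ^ i) := by
        rintro g ⟨hg, hgX⟩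
        rw [Set.mem_univ_pi]
        intro f
        refine ⟨hg.1 f, ?_⟩
        have h1 : g f = g (∑ i ∈ Finset.range (f.natDegree + 1), C (f.coeff i) * X ^ i) := by
          conv_lhs => rw [Polynomial.as_sum_range_C_mul_X_pow f]
        rw [h1]
        refine le_trans (n_sum_le habv hg _ _) (Finset.sum_le_sum ?_)
        intro i _
        rw [hg.2.2.2, hg.2.1, n_pow habv hg]
        have h2 : g X ^ i ≤ R ^ i := pow_le_pow_left₀ (hg.1 X) hgX i
        exact mul_le_mul_of_nonneg_left h2 (habv.1 _)
      have hTcl : IsClosed T := by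
        have he : T = {g : Polynomial K → ℝ | ∀ f, 0 ≤ g f} ∩
            ({g | ∀ c : K, g (C c) = abv c} ∩
            ({g | ∀ f h, g (f + h) ≤ g f + g h} ∩
            ({g | ∀ f h, g (f * h) = g f * g h} ∩ {g | g X ≤ R}))) := by
          ext g
          simp only [hTdef, IsMultSeminorm, Set.mem_setOf_eq, Set.mem_inter_iff]
          tauto
        rw [he]
        refine IsClosed.inter ?_ (IsClosed.inter ?_ (IsClosed.inter ?_ (IsClosed.inter ?_ ?_)))
        · have : {g : Polynomial K → ℝ | ∀ f, 0 ≤ g f} = ⋂ f, {g | 0 ≤ g f} := by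
            ext; simp
          rw [this]
          exact isClosed_iInter fun f => isClosed_le continuous_const (continuous_apply f)
        · have : {g : Polynomial K → ℝ | ∀ c : K, g (C c) = abv c}
              = ⋂ c : K, {g | g (C c) = abv c} := by ext; simp
          rw [this]
          exact isClosed_iInter fun c => isClosed_eq (continuous_apply _) continuous_const
        · have : {g : Polynomial K → ℝ | ∀ f h, g (f + h) ≤ g f + g h}
              = ⋂ f, ⋂ h, {g | g (f + h) ≤ g f + g h} := by ext; simp
          rw [this]
          exact isClosed_iInter fun f => isClosed_iInter fun h =>
            isClosed_le (continuous_apply _) ((continuous_apply f).add (continuous_apply h))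
        · have : {g : Polynomial K → ℝ | ∀ f h, g (f * h) = g f * g h}
              = ⋂ f, ⋂ h, {g | g (f * h) = g f * g h} := by ext; simp
          rw [this]
          exact isClosed_iInter fun f => isClosed_iInter fun h =>
            isClosed_eq (continuous_apply _) ((continuous_apply f).mul (continuous_apply h))
        · exact isClosed_le (continuous_apply X) continuous_const
      have hTcomp : IsCompact T :=
        IsCompact.of_isClosed_subset (isCompact_univ_pi fun f => isCompact_Icc) hTcl hTsub
      refine ⟨{σ : BerkLine K abv | σ.1 X ≤ R}, ?_, ?_⟩
      · rw [Topology.IsEmbedding.subtypeVal.isCompact_iff]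
        have himg : Subtype.val '' {σ : BerkLine K abv | σ.1 X ≤ R} = T := by
          ext g
          constructor
          · rintro ⟨⟨g', hg'⟩, hmem, rfl⟩; exact ⟨hg', hmem⟩
          · rintro ⟨hg1, hg2⟩; exact ⟨⟨g, hg1⟩, hg2, rfl⟩
        rw [himg]
        exact hTcomp
      · have hopen : IsOpen {σ : BerkLine K abv | σ.1 X < R} :=
          isOpen_Iio.preimage ((continuous_apply X).comp continuous_subtype_val)
        apply Filter.mem_of_superset (hopen.mem_nhds (show ξ.1 X < R from hRX))
        intro σ hσ
        exact le_of_lt (show σ.1 X < R from hσ)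
    exact inferInstance
  · -- existence of arcs
    intro ξ ξ' hne
    obtain ⟨N, hN⟩ := ξ
    obtain ⟨N', hN'⟩ := ξ'
    have hnv : N ≠ N' := fun h => hne (Subtype.ext h)
    obtain ⟨γ, h1, h2, h3, h4, _⟩ := main_arc habv hN hN' hnv
    exact ⟨γ, h1, h2, h3, h4⟩
  · -- uniqueness of arcs
    intro ξ ξ' γ γ' hγc hγi hγ0 hγ1 hγ'c hγ'i hγ'0 hγ'1
    by_cases hee : ξ = ξ'
    · exfalso
      have h01 : γ 0 = γ 1 := by rw [hγ0, hγ1, hee]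
      have h2 := hγi h01
      have hcoe := congrArg (fun t : unitInterval => (t : ℝ)) h2
      norm_num at hcoe
    obtain ⟨N, hN⟩ := ξ
    obtain ⟨N', hN'⟩ := ξ'
    have hnv : N ≠ N' := fun h => hee (Subtype.ext h)
    obtain ⟨γ₀, hγ₀c, hγ₀i, hγ₀0, hγ₀1, hγ₀char⟩ := main_arc habv hN hN' hnv
    have key : ∀ δ : unitInterval → BerkLine K abv, Continuous δ → Function.Injective δ →
        δ 0 = ⟨N, hN⟩ → δ 1 = ⟨N', hN'⟩ → Set.range δ = Set.range γ₀ := by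
      intro δ hδc hδi hδ0 hδ1
      have hxiS : (⟨N, hN⟩ : BerkLine K abv) ∈ Set.range δ := ⟨0, hδ0⟩
      have hxi'S : (⟨N', hN'⟩ : BerkLine K abv) ∈ Set.range δ := ⟨1, hδ1⟩
      have hSpre : IsPreconnected (Set.range δ) := isPreconnected_range hδc
      have hsub : Set.range γ₀ ⊆ Set.range δ := by
        rintro σ ⟨t, rfl⟩
        obtain ⟨r, hr0, hrm, hor⟩ := hγ₀char t
        rcases hor with hor | hor
        · have he : γ₀ t = ⟨nr N r, nr_isMultSeminorm habv hN hr0⟩ := Subtype.ext hor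
          rw [he]
          exact contain habv hN hN' hr0 hrm hSpre hxiS hxi'S
        · have he : γ₀ t = ⟨nr N' r, nr_isMultSeminorm habv hN' hr0⟩ := Subtype.ext hor
          rw [he]
          exact contain habv hN' hN hr0 (by rw [mergeR_comm]; exact hrm) hSpre hxi'S hxiS
      have hemb := (hδc.isClosedEmbedding hδi).isEmbedding
      have himg : δ '' (δ ⁻¹' Set.range γ₀) = Set.range γ₀ :=
        Set.image_preimage_eq_of_subset hsub
      have hTpre : IsPreconnected (δ ⁻¹' Set.range γ₀) := by
        apply hemb.toIsInducing.isPreconnected_image.mp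
        rw [himg]
        exact isPreconnected_range hγ₀c
      have hT'pre : IsPreconnected (Subtype.val '' (δ ⁻¹' Set.range γ₀) : Set ℝ) :=
        hTpre.image _ continuous_subtype_val.continuousOn
      have h0T : (0 : unitInterval) ∈ δ ⁻¹' Set.range γ₀ := by
        rw [Set.mem_preimage, hδ0, ← hγ₀0]; exact ⟨0, rfl⟩
      have h1T : (1 : unitInterval) ∈ δ ⁻¹' Set.range γ₀ := by
        rw [Set.mem_preimage, hδ1, ← hγ₀1]; exact ⟨1, rfl⟩
      have hIcc : Set.Icc (0:ℝ) 1 ⊆ Subtype.val '' (δ ⁻¹' Set.range γ₀) :=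
        hT'pre.Icc_subset ⟨0, h0T, rfl⟩ ⟨1, h1T, rfl⟩
      apply Set.Subset.antisymm ?_ hsub
      rintro σ ⟨t, rfl⟩
      obtain ⟨t', ht'T, ht'e⟩ := hIcc t.2
      have het : t' = t := Subtype.ext ht'e
      rw [← het]
      exact ht'T
    rw [key γ hγc hγi hγ0 hγ1, key γ' hγ'c hγ'i hγ'0 hγ'1]
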